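/- Let X be a nontrivial circulant p-graph with adjacency matrix d_X. Then the set of complex p×p matrices commuting with the permutation matrix of every automorphism of X equals the unital subalgebra ℂ[d_X] of M_p(ℂ) consisting of complex polynomials in d_X. In particular, every matrix commuting with all automorphisms of X is a polynomial in d_X. -/

import Mathlib

open Polynomial Finset

section Psi
variable (p : ℕ) [hp : Fact p.Prime]

noncomputable def ww : ℂ := Complex.exp (2 * Real.pi * Complex.I / p)

lemma ww_prim : IsPrimitiveRoot (ww p) p := Complex.isPrimitiveRoot_exp p hp.out.ne_zero

lemma ww_pow_p : ww p ^ p = 1 := (ww_prim p).pow_eq_one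

lemma ww_pow_mod (n : ℕ) : ww p ^ (n % p) = ww p ^ n := by
  conv_rhs => rw [← Nat.div_add_mod n p, pow_add, pow_mul, ww_pow_p, one_pow, one_mul]

noncomputable def psi (k : ZMod p) : ℂ := ww p ^ k.val

variable {p}

lemma psi_add (a b : ZMod p) : psi p (a + b) = psi p a * psi p b := by
  haveI : NeZero p := ⟨hp.out.ne_zero⟩
  rw [psi, ZMod.val_add, ww_pow_mod, pow_add]; rfl

lemma psi_zero : psi p 0 = 1 := by
  haveI : NeZero p := ⟨hp.out.ne_zero⟩
  simp [psi]

lemma psi_one : psi p 1 = ww p := by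
  haveI : Fact (1 < p) := ⟨hp.out.one_lt⟩
  simp [psi, ZMod.val_one]

lemma sum_psi_eq_zero : ∑ a : ZMod p, psi p a = 0 := by
  have h1 : ∑ a : ZMod p, psi p (a + 1) = ∑ a : ZMod p, psi p a :=
    Fintype.sum_equiv (Equiv.addRight 1) _ _ (fun a => rfl)
  have h2 : ∑ a : ZMod p, psi p (a + 1) = ww p * ∑ a : ZMod p, psi p a := by
    rw [Finset.mul_sum]
    exact Finset.sum_congr rfl fun a _ => by rw [psi_add, psi_one, mul_comm]
  have hne : ww p ≠ 1 := (ww_prim p).ne_one hp.out.one_lt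
  have h3 := h1.symm.trans h2
  by_contra hs
  exact hne (mul_right_cancel₀ hs (by rw [one_mul]; exact h3)).symm

lemma sum_psi_mul (t : ZMod p) (ht : t ≠ 0) : ∑ a : ZMod p, psi p (a * t) = 0 := by
  rw [Fintype.sum_equiv (Equiv.mulRight₀ t ht) (fun a => psi p (a * t)) (psi p) (fun a => rfl)]
  exact sum_psi_eq_zero

lemma sum_psi_mul' (t : ZMod p) :
    ∑ a : ZMod p, psi p (a * t) = if t = 0 then (p : ℂ) else 0 := by
  split_ifs with h
  · subst h; simp [psi_zero, ZMod.card]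
  · exact sum_psi_mul t h

/-- DFT injectivity. -/
lemma dft_inj (c d : ZMod p → ℂ)
    (h : ∀ a : ZMod p, ∑ k : ZMod p, c k * psi p (a * k) = ∑ k : ZMod p, d k * psi p (a * k)) :
    c = d := by
  funext k0
  have key : ∀ e : ZMod p → ℂ, (∀ a : ZMod p, ∑ k : ZMod p, e k * psi p (a * k) = 0) →
      e k0 = 0 := by
    intro e he
    have h1 : ∑ a : ZMod p, (∑ k : ZMod p, e k * psi p (a * k)) * psi p (a * (-k0)) = 0 := by
      simp only [he, zero_mul, Finset.sum_const_zero]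
    have h2 : ∑ a : ZMod p, (∑ k : ZMod p, e k * psi p (a * k)) * psi p (a * (-k0))
        = ∑ k : ZMod p, e k * ∑ a : ZMod p, psi p (a * (k - k0)) := by
      simp only [Finset.sum_mul]
      rw [Finset.sum_comm]
      refine Finset.sum_congr rfl fun k _ => ?_
      rw [Finset.mul_sum]
      refine Finset.sum_congr rfl fun a _ => ?_
      rw [mul_assoc, ← psi_add]
      ring_nf
    have h3 : ∑ k : ZMod p, e k * ∑ a : ZMod p, psi p (a * (k - k0)) = (p : ℂ) * e k0 := by
      rw [Fintype.sum_eq_single k0]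
      · rw [sum_psi_mul' (k0 - k0)]; simp [mul_comm]
      · intro k hk
        rw [sum_psi_mul' (k - k0), if_neg (sub_ne_zero.mpr hk), mul_zero]
    have hp0 : (p : ℂ) ≠ 0 := Nat.cast_ne_zero.mpr hp.out.ne_zero
    have := h1
    rw [h2, h3] at this
    exact (mul_eq_zero.mp this).resolve_left hp0
  have := key (fun k => c k - d k) (fun a => by
    simp only [sub_mul, Finset.sum_sub_distrib, h a, sub_self])
  linear_combination this

lemma sum_zmod_eq_range {M : Type*} [AddCommMonoid M] (F : ZMod p → M) :
    ∑ k : ZMod p, F k = ∑ n ∈ Finset.range p, F (n : ZMod p) := by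
  haveI : NeZero p := ⟨hp.out.ne_zero⟩
  refine Finset.sum_nbij' (fun k => k.val) (fun n => (n : ZMod p)) ?_ ?_ ?_ ?_ ?_
  · intro a _; exact Finset.mem_range.mpr (ZMod.val_lt a)
  · intro a _; exact Finset.mem_univ _
  · intro a _; exact ZMod.natCast_rightInverse a
  · intro a ha; exact ZMod.val_cast_of_lt (Finset.mem_range.mp ha)
  · intro a _; rw [ZMod.natCast_rightInverse a]

/-- Linear independence: an integer relation among `ψ k` must have constant coefficients. -/
lemma psi_int_rel (g : ZMod p → ℤ)
    (h : ∑ k : ZMod p, (g k : ℂ) * psi p k = 0) : ∀ k l : ZMod p, g k = g l := by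
  haveI : NeZero p := ⟨hp.out.ne_zero⟩
  set P : ℚ[X] := ∑ n ∈ Finset.range p, Polynomial.C ((g (n : ZMod p) : ℚ)) * X ^ n with hP
  have hcoeff : ∀ n < p, P.coeff n = (g (n : ZMod p) : ℚ) := by
    intro n hn
    rw [hP, Polynomial.finset_sum_coeff]
    rw [Finset.sum_eq_single n]
    · simp
    · intro b _ hb; simp [Polynomial.coeff_X_pow, Ne.symm hb]
    · intro hn'; exact absurd (Finset.mem_range.mpr hn) hn'
  have heval : Polynomial.aeval (ww p) P = 0 := by
    rw [hP]
    have : ∀ n ∈ Finset.range p, Polynomial.aeval (ww p) (Polynomial.C ((g (n : ZMod p) : ℚ)) * X ^ n)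
        = (g ((n : ZMod p)) : ℂ) * psi p ((n : ZMod p)) := by
      intro n hn
      rw [map_mul, Polynomial.aeval_C, map_pow, Polynomial.aeval_X]
      norm_num [psi, ZMod.val_cast_of_lt (Finset.mem_range.mp hn)]
    rw [map_sum, Finset.sum_congr rfl this, ← sum_zmod_eq_range (fun k => (g k : ℂ) * psi p k), h]
  have hint : IsIntegral ℚ (ww p) := ((ww_prim p).isIntegral hp.out.pos).tower_top
  have hdvd : minpoly ℚ (ww p) ∣ P := minpoly.dvd ℚ (ww p) heval
  rw [← Polynomial.cyclotomic_eq_minpoly_rat (ww_prim p) hp.out.pos] at hdvd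
  obtain ⟨Q, hQ⟩ := hdvd
  have hcyc_deg : (Polynomial.cyclotomic p ℚ).natDegree = p - 1 := by
    rw [Polynomial.natDegree_cyclotomic, Nat.totient_prime hp.out]
  have hconst : ∃ c : ℚ, ∀ n < p, P.coeff n = c := by
    by_cases hQ0 : Q = 0
    · exact ⟨0, fun n hn => by rw [hQ, hQ0, mul_zero, Polynomial.coeff_zero]⟩
    · have hPdeg : P.natDegree ≤ p - 1 := by
        refine le_trans (Polynomial.natDegree_sum_le _ _) ?_
        rw [Finset.fold_max_le]
        constructor
        · exact Nat.zero_le _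
        · intro n hn
          refine le_trans (Polynomial.natDegree_C_mul_le _ _) ?_
          rw [Polynomial.natDegree_X_pow]
          have := Finset.mem_range.mp hn
          omega
      have hcyc0 : Polynomial.cyclotomic p ℚ ≠ 0 := Polynomial.cyclotomic_ne_zero p ℚ
      have : P.natDegree = p - 1 + Q.natDegree := by
        rw [hQ, Polynomial.natDegree_mul hcyc0 hQ0, hcyc_deg]
      have hQdeg : Q.natDegree = 0 := by omega
      obtain ⟨c, hc⟩ : ∃ c, Q = Polynomial.C c := ⟨Q.coeff 0, Polynomial.eq_C_of_natDegree_eq_zero hQdeg⟩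
      refine ⟨c, fun n hn => ?_⟩
      rw [hQ, hc, Polynomial.coeff_mul_C, Polynomial.cyclotomic_prime ℚ p,
        Polynomial.finset_sum_coeff]
      rw [Finset.sum_eq_single n]
      · simp
      · intro b _ hb; simp [Polynomial.coeff_X_pow, Ne.symm hb]
      · intro hn'; exact absurd (Finset.mem_range.mpr hn) hn'
  obtain ⟨c, hc⟩ := hconst
  intro k l
  have hk := hc k.val (ZMod.val_lt k)
  have hl := hc l.val (ZMod.val_lt l)
  rw [hcoeff k.val (ZMod.val_lt k)] at hk
  rw [hcoeff l.val (ZMod.val_lt l)] at hl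
  rw [ZMod.natCast_rightInverse k] at hk
  rw [ZMod.natCast_rightInverse l] at hl
  exact_mod_cast hk.trans hl.symm

end Psi

section Circ
variable {p : ℕ} [hp : Fact p.Prime]

def IsCirc (M : Matrix (ZMod p) (ZMod p) ℂ) : Prop := ∀ i j : ZMod p, M i j = M 0 (j - i)

noncomputable def hatm (M : Matrix (ZMod p) (ZMod p) ℂ) (a : ZMod p) : ℂ :=
  ∑ k : ZMod p, M 0 k * psi p (a * k)

lemma isCirc_one : IsCirc (1 : Matrix (ZMod p) (ZMod p) ℂ) := by
  intro i j
  by_cases h : i = j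
  · subst h; simp [Matrix.one_apply]
  · rw [Matrix.one_apply_ne h, Matrix.one_apply_ne (fun hc => h (sub_eq_zero.mp hc.symm).symm)]

lemma isCirc_add {M N : Matrix (ZMod p) (ZMod p) ℂ} (hM : IsCirc M) (hN : IsCirc N) :
    IsCirc (M + N) := fun i j => by simp [Matrix.add_apply, hM i j, hN i j]

lemma isCirc_smul {M : Matrix (ZMod p) (ZMod p) ℂ} (x : ℂ) (hM : IsCirc M) :
    IsCirc (x • M) := fun i j => by simp [Matrix.smul_apply, hM i j]

lemma isCirc_mul {M N : Matrix (ZMod p) (ZMod p) ℂ} (hM : IsCirc M) (hN : IsCirc N) :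
    IsCirc (M * N) := by
  intro i j
  rw [Matrix.mul_apply, Matrix.mul_apply]
  refine Fintype.sum_equiv (Equiv.subRight i) _ _ (fun k => ?_)
  show M i k * N k j = M 0 (k - i) * N (k - i) (j - i)
  rw [hM i k, hN k j, hN (k - i) (j - i)]
  congr 2
  ring

lemma hatm_one (a : ZMod p) : hatm (1 : Matrix (ZMod p) (ZMod p) ℂ) a = 1 := by
  rw [hatm, Fintype.sum_eq_single (0 : ZMod p)]
  · simp [Matrix.one_apply, psi_zero]
  · intro k hk; simp [Matrix.one_apply, Ne.symm hk]

lemma hatm_add (M N : Matrix (ZMod p) (ZMod p) ℂ) (a : ZMod p) :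
    hatm (M + N) a = hatm M a + hatm N a := by
  simp [hatm, add_mul, Finset.sum_add_distrib]

lemma hatm_smul (x : ℂ) (M : Matrix (ZMod p) (ZMod p) ℂ) (a : ZMod p) :
    hatm (x • M) a = x * hatm M a := by
  simp [hatm, Finset.mul_sum, mul_assoc]

lemma hatm_mul {M N : Matrix (ZMod p) (ZMod p) ℂ} (hN : IsCirc N) (a : ZMod p) :
    hatm (M * N) a = hatm M a * hatm N a := by
  rw [hatm]
  have step1 : ∀ k : ZMod p, (M * N) 0 k * psi p (a * k)
      = ∑ j : ZMod p, M 0 j * (N 0 (k - j) * psi p (a * k)) := by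
    intro k
    rw [Matrix.mul_apply, Finset.sum_mul]
    exact Finset.sum_congr rfl fun j _ => by rw [hN j k, mul_assoc]
  rw [Finset.sum_congr rfl (fun k _ => step1 k), Finset.sum_comm]
  have step2 : ∀ j : ZMod p, ∑ k : ZMod p, M 0 j * (N 0 (k - j) * psi p (a * k))
      = M 0 j * psi p (a * j) * hatm N a := by
    intro j
    rw [hatm, Finset.mul_sum]
    refine Fintype.sum_equiv (Equiv.subRight j) _ _ (fun k => ?_)
    show M 0 j * (N 0 (k - j) * psi p (a * k))
        = M 0 j * psi p (a * j) * (N 0 (k - j) * psi p (a * (k - j)))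
    rw [show a * k = a * j + a * (k - j) by ring, psi_add]
    ring
  rw [Finset.sum_congr rfl (fun j _ => step2 j), ← Finset.sum_mul]
  rfl

/-- Polynomial functional calculus for circulants. -/
lemma aeval_circ (A : Matrix (ZMod p) (ZMod p) ℂ) (hA : IsCirc A) (q : ℂ[X]) :
    IsCirc (Polynomial.aeval A q) ∧
      ∀ a : ZMod p, hatm (Polynomial.aeval A q) a = Polynomial.eval (hatm A a) q := by
  induction q using Polynomial.induction_on' with
  | add f g hf hg =>
    rw [map_add]
    exact ⟨isCirc_add hf.1 hg.1, fun a => by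
      rw [hatm_add, hf.2 a, hg.2 a, Polynomial.eval_add]⟩
  | monomial n x =>
    have hmono : Polynomial.aeval A ((Polynomial.monomial n) x) = x • A ^ n := by
      rw [Polynomial.aeval_monomial]
      rw [Algebra.algebraMap_eq_smul_one, smul_mul_assoc, one_mul]
    have hpow : ∀ n : ℕ, IsCirc (A ^ n) ∧ ∀ a : ZMod p, hatm (A ^ n) a = (hatm A a) ^ n := by
      intro n
      induction n with
      | zero => exact ⟨by rw [pow_zero]; exact isCirc_one, fun a => by rw [pow_zero, hatm_one, pow_zero]⟩
      | succ m ih =>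
        refine ⟨by rw [pow_succ]; exact isCirc_mul ih.1 hA, fun a => ?_⟩
        rw [pow_succ, hatm_mul hA, ih.2 a, pow_succ]
    rw [hmono]
    exact ⟨isCirc_smul x (hpow n).1, fun a => by
      rw [hatm_smul, (hpow n).2 a, Polynomial.eval_monomial]⟩

/-- Two circulant matrices with equal hats are equal. -/
lemma circ_ext {M N : Matrix (ZMod p) (ZMod p) ℂ} (hM : IsCirc M) (hN : IsCirc N)
    (h : ∀ a : ZMod p, hatm M a = hatm N a) : M = N := by
  have hrow : (fun k => M 0 k) = (fun k => N 0 k) := dft_inj _ _ (fun a => h a)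
  ext i j
  rw [hM i j, hN i j]
  exact congrFun hrow (j - i)

end Circ

/-- `σ` is an automorphism of the graph `X`. -/
def IsCircAut {p : ℕ} (X : SimpleGraph (ZMod p)) (σ : Equiv.Perm (ZMod p)) : Prop :=
  ∀ i j : ZMod p, X.Adj (σ i) (σ j) ↔ X.Adj i j

/-- The permutation matrix `P_σ`, characterized by `P_σ e_i = e_{σ i}`. -/
def permMatrixZ {p : ℕ} (σ : Equiv.Perm (ZMod p)) : Matrix (ZMod p) (ZMod p) ℂ :=
  Matrix.of fun i j => if i = σ j then 1 else 0

section Perm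
variable {p : ℕ} [hp : Fact p.Prime]

lemma permMul (σ : Equiv.Perm (ZMod p)) (f : Matrix (ZMod p) (ZMod p) ℂ) (i j : ZMod p) :
    (permMatrixZ σ * f) i j = f (σ.symm i) j := by
  rw [Matrix.mul_apply, Fintype.sum_eq_single (σ.symm i)]
  · simp [permMatrixZ]
  · intro k hk
    rw [permMatrixZ]
    simp only [Matrix.of_apply]
    rw [if_neg, zero_mul]
    intro hc
    exact hk (by rw [hc, Equiv.symm_apply_apply])

lemma mulPerm (σ : Equiv.Perm (ZMod p)) (f : Matrix (ZMod p) (ZMod p) ℂ) (i j : ZMod p) :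
    (f * permMatrixZ σ) i j = f i (σ j) := by
  rw [Matrix.mul_apply, Fintype.sum_eq_single (σ j)]
  · simp [permMatrixZ]
  · intro k hk
    rw [permMatrixZ]
    simp only [Matrix.of_apply]
    rw [if_neg hk, mul_zero]

end Perm

theorem stmt12 {p : ℕ} [Fact p.Prime] [NeZero p]
    (X : SimpleGraph (ZMod p)) [DecidableRel X.Adj] (S : Set (ZMod p))
    (hS : ∀ i j : ZMod p, X.Adj i j ↔ j - i ∈ S)
    (hne : S.Nonempty) (hnc : S ≠ {x : ZMod p | x ≠ 0}) :
    {f : Matrix (ZMod p) (ZMod p) ℂ |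
        ∀ σ : Equiv.Perm (ZMod p), IsCircAut X σ →
          permMatrixZ σ * f = f * permMatrixZ σ} =
      Set.range (fun q : Polynomial ℂ => Polynomial.aeval (X.adjMatrix ℂ) q) := by
  classical
  -- the finset version of S
  set T : Finset (ZMod p) := Finset.univ.filter (fun s => X.Adj 0 s) with hTdef
  have hT : ∀ s : ZMod p, s ∈ T ↔ s ∈ S := by
    intro s
    rw [hTdef, Finset.mem_filter]
    simp only [Finset.mem_univ, true_and]
    rw [hS 0 s, sub_zero]
  have hT0 : (0 : ZMod p) ∉ T := by
    rw [hTdef, Finset.mem_filter]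
    rintro ⟨-, h⟩
    exact X.irrefl h
  have hTne : T.Nonempty := by
    obtain ⟨s, hs⟩ := hne
    exact ⟨s, (hT s).mpr hs⟩
  -- the eigenvalue function
  set lam : ZMod p → ℂ := fun a => ∑ s ∈ T, psi p (a * s) with hlam
  -- the adjacency matrix is circulant with hat = lam
  have adjCirc : IsCirc (X.adjMatrix ℂ) := by
    intro i j
    rw [SimpleGraph.adjMatrix_apply, SimpleGraph.adjMatrix_apply]
    congr 1
    rw [hS i j, hS 0 (j - i), sub_zero]
  have hatAdj : ∀ a : ZMod p, hatm (X.adjMatrix ℂ) a = lam a := by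
    intro a
    rw [hatm]
    have hl : lam a = ∑ s ∈ T, psi p (a * s) := rfl
    rw [hl, hTdef, Finset.sum_filter]
    refine Finset.sum_congr rfl fun k _ => ?_
    rw [SimpleGraph.adjMatrix_apply]
    split_ifs <;> simp
  apply Set.Subset.antisymm
  · -- hard direction
    intro f hf
    simp only [Set.mem_setOf_eq] at hf
    -- translations are automorphisms
    have hauT : ∀ t : ZMod p, IsCircAut X (Equiv.addRight t) := by
      intro t i j
      simp only [Equiv.coe_addRight]
      rw [hS (i + t) (j + t), hS i j]
      have : j + t - (i + t) = j - i := by ring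
      rw [this]
    -- f is circulant
    have hfc : IsCirc f := by
      intro i j
      have h := hf (Equiv.addRight i) (hauT i)
      have h2 := congrFun (congrFun h i) (j - i)
      rw [permMul, mulPerm] at h2
      simp only [Equiv.addRight_symm_apply, Equiv.coe_addRight, sub_add_cancel] at h2
      have h3 : i + -i = 0 := by ring
      rw [h3] at h2
      exact h2.symm
    -- multiplicative invariance
    have hmul : ∀ m : ZMod p, m ≠ 0 → (∀ s : ZMod p, s ∈ T ↔ m * s ∈ T) →
        ∀ k : ZMod p, f 0 (m * k) = f 0 k := by
      intro m hm0 hmS k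
      set σ : Equiv.Perm (ZMod p) := Equiv.mulLeft₀ m hm0 with hσ
      have haut : IsCircAut X σ := by
        intro i j
        show X.Adj (m * i) (m * j) ↔ X.Adj i j
        rw [hS (m * i) (m * j), hS i j]
        have : m * j - m * i = m * (j - i) := by ring
        rw [this]
        rw [← hT (j - i), ← hT (m * (j - i))]
        exact (hmS (j - i)).symm
      have h := hf σ haut
      have h2 := congrFun (congrFun h 0) k
      rw [permMul, mulPerm] at h2
      have h0 : σ.symm 0 = 0 := by
        apply σ.injective
        rw [Equiv.apply_symm_apply]
        show (0 : ZMod p) = m * 0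
        rw [mul_zero]
      rw [h0] at h2
      have hσk : σ k = m * k := rfl
      rw [hσk] at h2
      exact h2.symm
    -- the key separation lemma
    have key : ∀ a b : ZMod p, lam a = lam b → hatm f a = hatm f b := by
      -- first some helper facts
      have himage : ∀ a : ZMod p, a ≠ 0 → lam a = ∑ k ∈ T.image (fun s => a * s), psi p k := by
        intro a ha
        rw [Finset.sum_image (fun x _ y _ h => mul_left_cancel₀ ha h)]
      have hzero_not : ∀ a : ZMod p, a ≠ 0 → (0 : ZMod p) ∉ T.image (fun s => a * s) := by
        intro a ha h
        obtain ⟨s, hs, hs0⟩ := Finset.mem_image.mp h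
        rcases mul_eq_zero.mp hs0 with h | h
        · exact ha h
        · exact hT0 (h ▸ hs)
      have sum_ind : ∀ (A : Finset (ZMod p)),
          ∑ k : ZMod p, (if k ∈ A then (1 : ℂ) else 0) * psi p k = ∑ k ∈ A, psi p k := by
        intro A
        have hsi : ∀ k : ZMod p, (if k ∈ A then (1 : ℂ) else 0) * psi p k
            = if k ∈ A then psi p k else 0 := by
          intro k; split_ifs <;> ring
        rw [Finset.sum_congr rfl fun k _ => hsi k, ← Finset.sum_filter,
          Finset.filter_mem_eq_inter, Finset.univ_inter]
      -- main case analysis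
      have main : ∀ a b : ZMod p, a ≠ 0 → b ≠ 0 → lam a = lam b → hatm f a = hatm f b := by
        intro a b ha hb hab
        set A := T.image (fun s => a * s) with hA
        set B := T.image (fun s => b * s) with hB
        have hAB : A = B := by
          set g : ZMod p → ℤ := fun k => (if k ∈ A then 1 else 0) - (if k ∈ B then 1 else 0)
            with hg
          have hrel : ∑ k : ZMod p, (g k : ℂ) * psi p k = 0 := by
            have : ∀ k : ZMod p, (g k : ℂ) * psi p k
                = (if k ∈ A then (1:ℂ) else 0) * psi p k - (if k ∈ B then (1:ℂ) else 0) * psi p k := by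
              intro k
              rw [hg]
              push_cast
              split_ifs <;> ring
            rw [Finset.sum_congr rfl fun k _ => this k, Finset.sum_sub_distrib,
              sum_ind A, sum_ind B, ← himage a ha, ← himage b hb, hab, sub_self]
          have hconst := psi_int_rel g hrel
          have hg0 : g 0 = 0 := by
            rw [hg]
            simp only [if_neg (show (0 : ZMod p) ∉ A from hzero_not a ha), if_neg (show (0 : ZMod p) ∉ B from hzero_not b hb), sub_zero]
          ext k
          have := hconst k 0
          rw [hg0] at this
          rw [hg] at this
          by_cases hk : k ∈ A <;> by_cases hk' : k ∈ B <;>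
            simp [hk, hk'] at this ⊢ <;> omega
        -- now build the multiplier m = b⁻¹ * a
        set m : ZMod p := b⁻¹ * a with hm
        have hm0 : m ≠ 0 := mul_ne_zero (inv_ne_zero hb) ha
        have hmS : ∀ s : ZMod p, s ∈ T ↔ m * s ∈ T := by
          intro s
          constructor
          · intro hsT
            have : a * s ∈ A := Finset.mem_image_of_mem _ hsT
            rw [hAB, hB] at this
            obtain ⟨t, ht, hts⟩ := Finset.mem_image.mp this
            have hmst : m * s = t := by
              rw [hm, mul_assoc, ← hts, ← mul_assoc, inv_mul_cancel₀ hb, one_mul]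
            rw [hmst]
            exact ht
          · intro hsT
            have : b * (m * s) ∈ B := Finset.mem_image_of_mem _ hsT
            rw [← hAB, hA] at this
            obtain ⟨t, ht, hts⟩ := Finset.mem_image.mp this
            have hbm : b * (m * s) = a * s := by
              rw [hm, show b * (b⁻¹ * a * s) = b * b⁻¹ * (a * s) from by ring,
                mul_inv_cancel₀ hb, one_mul]
            rw [hbm] at hts
            have : t = s := mul_left_cancel₀ ha hts
            rw [← this]
            exact ht
        -- reindex
        rw [hatm, hatm]
        refine Fintype.sum_equiv (Equiv.mulLeft₀ m hm0) _ _ (fun k => ?_)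
        show f 0 k * psi p (a * k) = f 0 (m * k) * psi p (b * (m * k))
        rw [hmul m hm0 hmS k]
        congr 2
        rw [hm, show b * (b⁻¹ * a * k) = b * b⁻¹ * (a * k) from by ring,
          mul_inv_cancel₀ hb, one_mul]
      -- check lam 0 ≠ lam b for b ≠ 0
      have hsep : ∀ b : ZMod p, b ≠ 0 → lam 0 ≠ lam b := by
        intro b hb hab
        set B := T.image (fun s => b * s) with hB
        have hlam0 : lam 0 = (T.card : ℂ) := by
          rw [hlam]
          simp [psi_zero]
        set g : ZMod p → ℤ := fun k => (if k ∈ B then 1 else 0) - (if k = 0 then (T.card : ℤ) else 0)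
          with hg
        have hrel : ∑ k : ZMod p, (g k : ℂ) * psi p k = 0 := by
          have : ∀ k : ZMod p, (g k : ℂ) * psi p k
              = (if k ∈ B then (1:ℂ) else 0) * psi p k
                - (if k = 0 then (T.card : ℂ) else 0) * psi p k := by
            intro k
            rw [hg]
            push_cast
            split_ifs <;> ring
          rw [Finset.sum_congr rfl fun k _ => this k, Finset.sum_sub_distrib, sum_ind B]
          have h2 : ∑ k : ZMod p, (if k = 0 then (T.card : ℂ) else 0) * psi p k
              = (T.card : ℂ) := by
            rw [Fintype.sum_eq_single (0 : ZMod p)]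
            · simp [psi_zero]
            · intro k hk; rw [if_neg hk, zero_mul]
          rw [h2, hB, ← himage b hb, ← hab, hlam0, sub_self]
        have hconst := psi_int_rel g hrel
        obtain ⟨s0, hs0⟩ := id hTne
        have hs0B : b * s0 ∈ B := Finset.mem_image_of_mem _ hs0
        have hs0ne : b * s0 ≠ 0 := by
          intro h
          rcases mul_eq_zero.mp h with h | h
          · exact hb h
          · exact hT0 (h ▸ hs0)
        have h1 : g (b * s0) = 1 := by
          rw [hg]; simp [hs0B, hs0ne]
        have h2 : g 0 = -(T.card : ℤ) := by
          have h0B : (0 : ZMod p) ∉ B := hzero_not b hb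
          rw [hg]; simp [h0B]
        have := hconst (b * s0) 0
        rw [h1, h2] at this
        have hcard : 0 < T.card := Finset.card_pos.mpr hTne
        omega
      intro a b hab
      by_cases ha : a = 0 <;> by_cases hb : b = 0
      · rw [ha, hb]
      · exact absurd (ha ▸ hab) (hsep b hb)
      · exact absurd (hb ▸ hab).symm (hsep a ha)
      · exact main a b ha hb hab
    -- interpolation
    set r : ℂ → ℂ := fun z => if h : ∃ a : ZMod p, lam a = z then hatm f h.choose else 0 with hr
    refine ⟨Lagrange.interpolate (Finset.univ.image lam) id r, ?_⟩
    have hcq := aeval_circ (X.adjMatrix ℂ) adjCirc (Lagrange.interpolate (Finset.univ.image lam) id r)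
    refine circ_ext hcq.1 hfc (fun a => ?_)
    rw [hcq.2 a, hatAdj a]
    have hmem : lam a ∈ Finset.univ.image lam := Finset.mem_image_of_mem _ (Finset.mem_univ a)
    have heval := Lagrange.eval_interpolate_at_node (s := Finset.univ.image lam) (v := id)
      r (Set.injOn_id _) hmem
    simp only [id_eq] at heval
    rw [heval]
    have hex : ∃ b : ZMod p, lam b = lam a := ⟨a, rfl⟩
    have hrla : r (lam a) = hatm f hex.choose := by
      simp only [hr]
      rw [dif_pos hex]
    rw [hrla]
    exact key _ _ hex.choose_spec
  · -- easy direction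
    rintro f ⟨q, rfl⟩
    intro σ hσ
    have hcomm : Commute (permMatrixZ σ) (X.adjMatrix ℂ) := by
      show _ = _
      ext i j
      rw [permMul, mulPerm, SimpleGraph.adjMatrix_apply, SimpleGraph.adjMatrix_apply]
      congr 1
      rw [← hσ (σ.symm i) j, Equiv.apply_symm_apply]
    have hc2 : ∀ q : Polynomial ℂ, Commute (permMatrixZ σ) (Polynomial.aeval (X.adjMatrix ℂ) q) := by
      intro q
      induction q using Polynomial.induction_on' with
      | add a b ha hb => rw [map_add]; exact ha.add_right hb
      | monomial n x =>
        rw [Polynomial.aeval_monomial]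
        have hca : Commute (permMatrixZ σ) ((algebraMap ℂ (Matrix (ZMod p) (ZMod p) ℂ)) x) :=
          (Algebra.commutes x (permMatrixZ σ)).symm
        exact hca.mul_right (hcomm.pow_right n)
    exact hc2 q
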